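/- Computational basis states have nonnegative (delta-function) Wigner representation: for all a = (a₁, a₂) ∈ ZMod d × ZMod d and all x ∈ ZMod d, the diagonal entry of the phase point operator satisfies (A_(a₁,a₂)) x x = 1 if x = a₂ and = 0 otherwise; consequently the discrete Wigner function of each computational basis projector |x⟩⟨x| is nonnegative at every phase space point. -/

import Mathlib

open Matrix Complex

/-- ω = exp(2πi/d). -/
noncomputable def omegaC (d : ℕ) : ℂ := Complex.exp (2 * Real.pi * Complex.I / d)

/-- The clock matrix `Z`, with `Z x x = ω ^ x.val`. -/
noncomputable def Zmat (d : ℕ) : Matrix (ZMod d) (ZMod d) ℂ :=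
  Matrix.diagonal (fun x => omegaC d ^ x.val)

/-- The shift matrix `X`, with `X x y = 1` iff `x = y + 1`. -/
noncomputable def Xmat (d : ℕ) : Matrix (ZMod d) (ZMod d) ℂ :=
  Matrix.of fun x y => if x = y + 1 then 1 else 0

/-- The Heisenberg–Weyl operator `T_a`. -/
noncomputable def TW (d : ℕ) [NeZero d] (a : ZMod d × ZMod d) : Matrix (ZMod d) (ZMod d) ℂ :=
  omegaC d ^ ((-((2 : ZMod d)⁻¹ * a.1 * a.2)).val) • (Zmat d ^ a.1.val * Xmat d ^ a.2.val)

/-- The phase point operator at the origin, `A_0 = (1/d) • ∑ a, T_a`. -/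
noncomputable def Apoint0 (d : ℕ) [NeZero d] : Matrix (ZMod d) (ZMod d) ℂ :=
  (1 / (d : ℂ)) • ∑ a : ZMod d × ZMod d, TW d a

/-- The phase point operator `A_u = T_u * A_0 * T_uᴴ`. -/
noncomputable def Apoint (d : ℕ) [NeZero d] (u : ZMod d × ZMod d) : Matrix (ZMod d) (ZMod d) ℂ :=
  TW d u * Apoint0 d * (TW d u)ᴴ

section aux
variable (d : ℕ) [NeZero d]

lemma omega_prim : IsPrimitiveRoot (omegaC d) d :=
  Complex.isPrimitiveRoot_exp d (NeZero.ne d)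

lemma omega_pow_d : omegaC d ^ d = 1 := (omega_prim d).pow_eq_one

lemma omega_pow_natCast (n : ℕ) : omegaC d ^ ((n : ZMod d)).val = omegaC d ^ n := by
  rw [ZMod.val_natCast]
  conv_rhs => rw [← Nat.mod_add_div n d]
  rw [pow_add, pow_mul, omega_pow_d, one_pow, mul_one]

lemma omega_val_add (a b : ZMod d) :
    omegaC d ^ ((a + b).val) = omegaC d ^ a.val * omegaC d ^ b.val := by
  have h : ((a.val + b.val : ℕ) : ZMod d) = a + b := by
    push_cast [ZMod.natCast_val, ZMod.cast_id]; ring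
  rw [← h, omega_pow_natCast, pow_add]

lemma omega_val_mul (a b : ZMod d) :
    omegaC d ^ ((a * b).val) = omegaC d ^ (a.val * b.val) := by
  have h : ((a.val * b.val : ℕ) : ZMod d) = a * b := by
    push_cast [ZMod.natCast_val, ZMod.cast_id]; ring
  rw [← h, omega_pow_natCast]

lemma omega_val_eq_one_iff (b : ZMod d) : omegaC d ^ b.val = 1 ↔ b = 0 := by
  rw [(omega_prim d).pow_eq_one_iff_dvd]
  constructor
  · intro h
    have := Nat.eq_zero_of_dvd_of_lt h ∘ id
    rcases Nat.eq_zero_or_pos b.val with h0 | hpos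
    · exact (ZMod.val_eq_zero b).mp h0
    · exact absurd (Nat.le_of_dvd hpos h) (not_le.mpr (ZMod.val_lt b))
  · rintro rfl; simp

lemma char_sum (b : ZMod d) :
    ∑ a : ZMod d, omegaC d ^ ((a * b).val) = if b = 0 then (d : ℂ) else 0 := by
  split_ifs with hb
  · subst hb; simp [ZMod.val_zero]
  · have key : (omegaC d ^ b.val) * ∑ a : ZMod d, omegaC d ^ ((a * b).val)
        = ∑ a : ZMod d, omegaC d ^ ((a * b).val) := by
      rw [Finset.mul_sum]
      refine Fintype.sum_equiv (Equiv.addRight (1 : ZMod d)) _ _ ?_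
      intro a
      have h : (Equiv.addRight (1 : ZMod d)) a * b = a * b + b := by
        simp [Equiv.coe_addRight]; ring
      rw [h, omega_val_add]
      ring
    have hne : omegaC d ^ b.val ≠ 1 := fun h => hb ((omega_val_eq_one_iff d b).mp h)
    have h2 : (omegaC d ^ b.val - 1) * ∑ a : ZMod d, omegaC d ^ ((a * b).val) = 0 := by
      rw [sub_mul, one_mul, key, sub_self]
    rcases mul_eq_zero.mp h2 with h | h
    · exact absurd (sub_eq_zero.mp h) hne
    · exact h

lemma Xmat_pow (n : ℕ) (x y : ZMod d) :
    (Xmat d ^ n) x y = if x = y + (n : ZMod d) then 1 else 0 := by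
  induction n generalizing y with
  | zero => simp [Matrix.one_apply]
  | succ n ih =>
    rw [pow_succ, Matrix.mul_apply]
    have h1 : ∀ z : ZMod d, (Xmat d ^ n) x z * Xmat d z y
        = if z = y + 1 then (Xmat d ^ n) x z else 0 := by
      intro z; simp only [Xmat, Matrix.of_apply]
      split_ifs <;> simp
    rw [Finset.sum_congr rfl fun z _ => h1 z, Finset.sum_ite_eq', ih]
    have h2 : y + 1 + (n : ZMod d) = y + ((n : ℕ) + 1 : ℕ) := by push_cast; ring
    simp [h2]

lemma TW_apply (a : ZMod d × ZMod d) (x y : ZMod d) :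
    TW d a x y
      = if x = y + a.2 then
          omegaC d ^ ((-((2 : ZMod d)⁻¹ * a.1 * a.2) + a.1 * x).val) else 0 := by
  rw [TW, Matrix.smul_apply, Zmat, Matrix.diagonal_pow, Matrix.diagonal_mul,
    Xmat_pow, ZMod.natCast_val, ZMod.cast_id]
  rw [Pi.pow_apply, ← pow_mul, omega_val_add, omega_val_mul]
  split_ifs with h
  · rw [mul_one, smul_eq_mul, mul_comm x.val a.1.val]
  · rw [mul_zero, smul_zero]

lemma Apoint0_apply (hodd : Odd d) (x y : ZMod d) :
    Apoint0 d x y = if y = -x then 1 else 0 := by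
  have h2u : IsUnit (2 : ZMod d) := by
    have := (ZMod.isUnit_iff_coprime 2 d).mpr (Nat.coprime_two_left.mpr hodd)
    simpa using this
  have h2 : (2 : ZMod d) * 2⁻¹ = 1 := ZMod.mul_inv_of_unit 2 h2u
  have hu : IsUnit ((2 : ZMod d)⁻¹) :=
    IsUnit.of_mul_eq_one 2 (by linear_combination h2)
  rw [Apoint0, Matrix.smul_apply, Matrix.sum_apply, Fintype.sum_prod_type]
  have hterm : ∀ a₁ a₂ : ZMod d, TW d (a₁, a₂) x y
      = if a₂ = x - y then omegaC d ^ ((a₁ * (2⁻¹ * (x + y))).val) else 0 := by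
    intro a₁ a₂
    rw [TW_apply]
    rcases eq_or_ne a₂ (x - y) with rfl | hne
    · rw [if_pos (by ring), if_pos rfl]
      have he : -((2 : ZMod d)⁻¹ * a₁ * (x - y)) + a₁ * x = a₁ * (2⁻¹ * (x + y)) := by
        linear_combination (-(a₁ * x)) * h2
      rw [he]
    · rw [if_neg (fun h => hne (by rw [h]; ring)), if_neg hne]
  simp only [hterm, Finset.sum_ite_eq', Finset.mem_univ, if_true]
  rw [char_sum]
  have hcond : ((2 : ZMod d)⁻¹ * (x + y) = 0) = (y = -x) := by
    rw [eq_iff_iff, hu.mul_right_eq_zero]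
    constructor
    · exact fun h => eq_neg_of_add_eq_zero_right h
    · intro h; rw [h]; ring
  simp only [hcond]
  split_ifs with h
  · rw [smul_eq_mul, one_div, inv_mul_cancel₀ (by exact_mod_cast NeZero.ne d)]
  · rw [smul_zero]

lemma omega_mul_conj : omegaC d * (starRingEnd ℂ) (omegaC d) = 1 := by
  rw [omegaC, ← Complex.exp_conj, ← Complex.exp_add]
  have : (2 * ↑Real.pi * I / ↑d) + (starRingEnd ℂ) (2 * ↑Real.pi * I / ↑d) = 0 := by
    simp [map_div₀, _root_.map_mul, map_ofNat, Complex.conj_I, Complex.conj_ofReal]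
    ring
  rw [this, Complex.exp_zero]

lemma omega_pow_mul_conj (k : ℕ) :
    omegaC d ^ k * (starRingEnd ℂ) (omegaC d ^ k) = 1 := by
  rw [map_pow, ← mul_pow, omega_mul_conj, one_pow]

lemma Apoint_diag (hodd : Odd d) (u : ZMod d × ZMod d) (x : ZMod d) :
    Apoint d u x x = if x = u.2 then 1 else 0 := by
  have h2u : IsUnit (2 : ZMod d) := by
    have := (ZMod.isUnit_iff_coprime 2 d).mpr (Nat.coprime_two_left.mpr hodd)
    simpa using this
  rw [Apoint, Matrix.mul_apply]
  have hfst : ∀ z : ZMod d, (TW d u * Apoint0 d) x z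
      = if z = -(x - u.2) then
          omegaC d ^ ((-((2 : ZMod d)⁻¹ * u.1 * u.2) + u.1 * x).val) else 0 := by
    intro z
    rw [Matrix.mul_apply]
    have hterm : ∀ y : ZMod d, TW d u x y * Apoint0 d y z
        = if y = x - u.2 then
            (omegaC d ^ ((-((2 : ZMod d)⁻¹ * u.1 * u.2) + u.1 * x).val)
              * if z = -y then 1 else 0) else 0 := by
      intro y
      rw [TW_apply, Apoint0_apply d hodd]
      rcases eq_or_ne y (x - u.2) with rfl | hne
      · rw [if_pos (by ring), if_pos rfl]
      · rw [if_neg (fun h => hne (by rw [h]; ring)), if_neg hne, zero_mul]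
    rw [Finset.sum_congr rfl fun y _ => hterm y, Finset.sum_ite_eq',
      if_pos (Finset.mem_univ _)]
    split_ifs with h
    · rw [mul_one]
    · rw [mul_zero]
  have hsum : ∀ z : ZMod d, (TW d u * Apoint0 d) x z * (TW d u)ᴴ z x
      = if z = -(x - u.2) then
          ((omegaC d ^ ((-((2 : ZMod d)⁻¹ * u.1 * u.2) + u.1 * x).val)
              * (starRingEnd ℂ) (TW d u x z))) else 0 := by
    intro z
    rw [hfst, Matrix.conjTranspose_apply]
    split_ifs <;> simp
  rw [Finset.sum_congr rfl fun z _ => hsum z, Finset.sum_ite_eq',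
    if_pos (Finset.mem_univ _), TW_apply, apply_ite (starRingEnd ℂ)]
  have hcond : (x = -(x - u.2) + u.2) ↔ (x = u.2) := by
    constructor
    · intro h
      have h2 : (2 : ZMod d) * (x - u.2) = 0 := by linear_combination h
      have := (h2u.mul_right_eq_zero).mp h2
      linear_combination this
    · intro h; rw [h]; ring
  by_cases hx : x = u.2
  · rw [if_pos (hcond.mpr hx), if_pos hx]
    exact omega_pow_mul_conj d _
  · rw [if_neg (fun h => hx (hcond.mp h)), map_zero, mul_zero, if_neg hx]

end aux

/-- Computational basis states have nonnegative (delta-function) Wigner representation. -/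
theorem basis_states_nonneg_wigner (d : ℕ) [NeZero d] (hodd : Odd d) (hd : 1 < d) :
    (∀ a : ZMod d × ZMod d, ∀ x : ZMod d,
        Apoint d a x x = if x = a.2 then 1 else 0) ∧
    (∀ x : ZMod d, ∀ u : ZMod d × ZMod d,
        0 ≤ (1 / (d : ℝ)) *
          ((Apoint d u * Matrix.single x x (1 : ℂ)).trace).re) := by
  have hA : ∀ a : ZMod d × ZMod d, ∀ x : ZMod d,
      Apoint d a x x = if x = a.2 then 1 else 0 := fun a x => Apoint_diag d hodd a x
  refine ⟨hA, ?_⟩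
  intro x u
  have htr : (Apoint d u * Matrix.single x x (1 : ℂ)).trace = Apoint d u x x := by
    simp [Matrix.trace, Matrix.diag, Matrix.mul_apply, Matrix.single, ite_and,
      mul_ite]
  rw [htr, hA]
  split_ifs <;> simp <;> positivity
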